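/- Let G be a finite solvable group with trivial Frattini subgroup, and let C = R × D as in the crown decomposition (C/R a crown, D a nontrivial normal subgroup). If H ≤ G satisfies HD = HR = G, then H = G. -/

import Mathlib

namespace PaperCrown

variable {G : Type*} [Group G]

/-- The chief factors `X₁/Y₁` and `X₂/Y₂` of `G` are `G`-isomorphic. -/
def IsGIso (Y₁ X₁ Y₂ X₂ : Subgroup G) [Y₁.Normal] [Y₂.Normal] : Prop :=
  ∃ e : (X₁.map (QuotientGroup.mk' Y₁)) ≃* (X₂.map (QuotientGroup.mk' Y₂)),
    ∀ (g : G) (a : X₁.map (QuotientGroup.mk' Y₁))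
      (h : (QuotientGroup.mk' Y₁ g) * (a : G ⧸ Y₁) * (QuotientGroup.mk' Y₁ g)⁻¹ ∈
        X₁.map (QuotientGroup.mk' Y₁)),
      ((e ⟨_, h⟩ : X₂.map (QuotientGroup.mk' Y₂)) : G ⧸ Y₂) =
        (QuotientGroup.mk' Y₂ g) * ((e a : X₂.map (QuotientGroup.mk' Y₂)) : G ⧸ Y₂) *
          (QuotientGroup.mk' Y₂ g)⁻¹

/-- For a subgroup with core `Y`, the subgroup of `G` corresponding to the socle
of `G/Y`: the intersection of all normal subgroups properly containing `Y`. -/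
def socAbove (Y : Subgroup G) : Subgroup G :=
  sInf {N : Subgroup G | N.Normal ∧ Y < N}

/-- `R_G(V)` for `V = X/Y`: the intersection of all maximal subgroups `M` of `G`
whose socle chief factor `X_M/Y_M` is `G`-isomorphic to `X/Y`. -/
def crownR (Y X : Subgroup G) [Y.Normal] : Subgroup G :=
  sInf {M : Subgroup G |
    IsCoatom M ∧ IsGIso M.normalCore (socAbove M.normalCore) Y X}

/-- `C_G(X/Y)`: the centralizer in `G` of the chief factor `X/Y`. -/
def crownC (Y X : Subgroup G) [Y.Normal] : Subgroup G :=
  (Subgroup.centralizer ((X.map (QuotientGroup.mk' Y)) : Set (G ⧸ Y))).comap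
    (QuotientGroup.mk' Y)

/-- `X/Y` is a chief factor of `G`. -/
def IsChiefFactor (Y X : Subgroup G) : Prop :=
  Y.Normal ∧ X.Normal ∧ Y < X ∧
    ∀ N : Subgroup G, N.Normal → Y ≤ N → N ≤ X → N = Y ∨ N = X

/-- The chief factor `X/Y` is complemented. -/
def IsComplemented' (Y X : Subgroup G) : Prop :=
  ∃ K : Subgroup G, K ⊔ X = ⊤ ∧ K ⊓ X = Y

end PaperCrown

open PaperCrown

namespace PC

open scoped Pointwise
open scoped commutatorElement

variable {G : Type*} [Group G]

/-- Dedekind modular law, version with the normal subgroup on the right of the join. -/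
theorem dedK (K H N : Subgroup G) [N.Normal] (h : K ≤ H) :
    H ⊓ (K ⊔ N) = K ⊔ (H ⊓ N) := by
  apply le_antisymm
  · rintro x ⟨hxH, hxKN⟩
    have hx' : x ∈ (K : Set G) * (N : Set G) := by
      rw [← Subgroup.mul_normal]; exact hxKN
    obtain ⟨k, hk, n, hn, rfl⟩ := hx'
    have hnH : n ∈ H := by
      have : k⁻¹ * (k * n) ∈ H := H.mul_mem (H.inv_mem (h hk)) hxH
      simpa using this
    exact Subgroup.mul_mem_sup hk ⟨hnH, hn⟩
  · exact sup_le (le_inf h le_sup_left) (inf_le_inf_left H le_sup_right)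

/-- Dedekind modular law, version with the normal subgroup on the left of the join. -/
theorem dedN (K H N : Subgroup G) [N.Normal] (h : N ≤ H) :
    H ⊓ (N ⊔ K) = N ⊔ (H ⊓ K) := by
  apply le_antisymm
  · rintro x ⟨hxH, hxNK⟩
    have hx' : x ∈ (N : Set G) * (K : Set G) := by
      rw [← Subgroup.normal_mul]; exact hxNK
    obtain ⟨n, hn, k, hk, rfl⟩ := hx'
    have hkH : k ∈ H := by
      have : n⁻¹ * (n * k) ∈ H := H.mul_mem (H.inv_mem (h hn)) hxH
      simpa using this
    exact Subgroup.mul_mem_sup hn ⟨hkH, hk⟩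
  · exact sup_le (le_inf h le_sup_left) (inf_le_inf_left H le_sup_right)

theorem card_lt [Finite G] {P Q : Subgroup G} (h : P < Q) :
    Nat.card P < Nat.card Q := by
  have h2 : ((P : Set G)).ncard < ((Q : Set G)).ncard :=
    Set.ncard_strictMono (SetLike.coe_ssubset_coe.mpr h)
  rwa [← Nat.card_coe_set_eq, ← Nat.card_coe_set_eq] at h2

theorem mem_crownC_iff (Y X : Subgroup G) [Y.Normal] (g : G) :
    g ∈ crownC Y X ↔ ∀ x ∈ X, g⁻¹ * x⁻¹ * g * x ∈ Y := by
  simp only [crownC, Subgroup.mem_comap, Subgroup.mem_centralizer_iff]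
  constructor
  · intro h x hx
    have h2 := h ((QuotientGroup.mk' Y) x) ⟨x, hx, rfl⟩
    rw [← map_mul, ← map_mul, QuotientGroup.mk'_apply, QuotientGroup.mk'_apply,
      QuotientGroup.eq] at h2
    have e : g⁻¹ * x⁻¹ * g * x = (x * g)⁻¹ * (g * x) := by group
    rwa [e]
  · rintro h q ⟨x, hx, rfl⟩
    rw [← map_mul, ← map_mul, QuotientGroup.mk'_apply, QuotientGroup.mk'_apply,
      QuotientGroup.eq]
    have e : (x * g)⁻¹ * (g * x) = g⁻¹ * x⁻¹ * g * x := by group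
    rw [e]; exact h x hx

theorem crownC_normal (Y X : Subgroup G) [Y.Normal] (hX : X.Normal) :
    (crownC Y X).Normal := by
  constructor
  intro x hx g
  rw [mem_crownC_iff] at hx ⊢
  intro z hz
  have hz' : g⁻¹ * z * g ∈ X := by
    have := hX.conj_mem z hz g⁻¹
    simpa using this
  have h1 := hx (g⁻¹ * z * g) hz'
  have h2 := (‹Y.Normal›).conj_mem _ h1 g
  have e : g * (x⁻¹ * (g⁻¹ * z * g)⁻¹ * x * (g⁻¹ * z * g)) * g⁻¹ =
      (g * x * g⁻¹)⁻¹ * z⁻¹ * (g * x * g⁻¹) * z := by group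
  rwa [e] at h2

theorem symm' {Y₁ X₁ Y₂ X₂ : Subgroup G} [Y₁.Normal] [Y₂.Normal] (hX₁ : X₁.Normal)
    (h : IsGIso Y₁ X₁ Y₂ X₂) : IsGIso Y₂ X₂ Y₁ X₁ := by
  obtain ⟨e, he⟩ := h
  refine ⟨e.symm, ?_⟩
  intro g b hb
  set a : (X₁.map (QuotientGroup.mk' Y₁)) := e.symm b with ha
  haveI : (X₁.map (QuotientGroup.mk' Y₁)).Normal :=
    hX₁.map _ (QuotientGroup.mk'_surjective Y₁)
  have hmem : (QuotientGroup.mk' Y₁ g) * (a : G ⧸ Y₁) * (QuotientGroup.mk' Y₁ g)⁻¹ ∈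
      X₁.map (QuotientGroup.mk' Y₁) := this.conj_mem _ a.2 _
  have h1 := he g a hmem
  have h2 : e ⟨_, hmem⟩ =
      ⟨(QuotientGroup.mk' Y₂ g) * (b : G ⧸ Y₂) * (QuotientGroup.mk' Y₂ g)⁻¹, hb⟩ := by
    apply Subtype.ext
    rw [h1, ha, e.apply_symm_apply]
  have h3 := congrArg e.symm h2
  rw [e.symm_apply_apply] at h3
  rw [← h3]

theorem trans' {Y₁ X₁ Y₂ X₂ Y₃ X₃ : Subgroup G} [Y₁.Normal] [Y₂.Normal] [Y₃.Normal]
    (h₁ : IsGIso Y₁ X₁ Y₂ X₂) (h₂ : IsGIso Y₂ X₂ Y₃ X₃) : IsGIso Y₁ X₁ Y₃ X₃ := by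
  obtain ⟨e₁, he₁⟩ := h₁
  obtain ⟨e₂, he₂⟩ := h₂
  refine ⟨e₁.trans e₂, ?_⟩
  intro g a h
  have h1 := he₁ g a h
  have hmem2 : (QuotientGroup.mk' Y₂ g) * ((e₁ a : _) : G ⧸ Y₂) * (QuotientGroup.mk' Y₂ g)⁻¹ ∈
      X₂.map (QuotientGroup.mk' Y₂) := by
    rw [← h1]; exact (e₁ ⟨_, h⟩).2
  have h2 := he₂ g (e₁ a) hmem2
  have h3 : e₁ ⟨_, h⟩ = ⟨_, hmem2⟩ := Subtype.ext h1
  show ((e₂ (e₁ ⟨_, h⟩) : _) : G ⧸ Y₃) = _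
  rw [h3, h2]
  rfl

theorem crownC_le {Y₁ X₁ Y₂ X₂ : Subgroup G} [Y₁.Normal] [Y₂.Normal]
    (h : IsGIso Y₁ X₁ Y₂ X₂) : crownC Y₁ X₁ ≤ crownC Y₂ X₂ := by
  obtain ⟨e, he⟩ := h
  intro g hg
  rw [crownC, Subgroup.mem_comap, Subgroup.mem_centralizer_iff] at hg ⊢
  intro r hr
  set b : (X₂.map (QuotientGroup.mk' Y₂)) := ⟨r, hr⟩ with hb
  set a : (X₁.map (QuotientGroup.mk' Y₁)) := e.symm b with ha
  have hcomm := hg (a : G ⧸ Y₁) a.2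
  have hconj : (QuotientGroup.mk' Y₁ g) * (a : G ⧸ Y₁) * (QuotientGroup.mk' Y₁ g)⁻¹
      = (a : G ⧸ Y₁) := by
    rw [← hcomm]; group
  have hmem : (QuotientGroup.mk' Y₁ g) * (a : G ⧸ Y₁) * (QuotientGroup.mk' Y₁ g)⁻¹ ∈
      X₁.map (QuotientGroup.mk' Y₁) := by rw [hconj]; exact a.2
  have h1 := he g a hmem
  have h2 : (⟨_, hmem⟩ : (X₁.map (QuotientGroup.mk' Y₁))) = a := Subtype.ext hconj
  rw [h2, ha, e.apply_symm_apply] at h1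
  -- h1 : (b : G ⧸ Y₂) = ḡ * b * ḡ⁻¹
  have : r = (QuotientGroup.mk' Y₂ g) * r * (QuotientGroup.mk' Y₂ g)⁻¹ := h1
  calc r * (QuotientGroup.mk' Y₂) g
      = ((QuotientGroup.mk' Y₂ g) * r * (QuotientGroup.mk' Y₂ g)⁻¹) * (QuotientGroup.mk' Y₂) g := by
        rw [← this]
    _ = (QuotientGroup.mk' Y₂) g * r := by group

/-- The second isomorphism theorem as a `G`-isomorphism of chief-like factors:
`E/(N ⊓ E) ≅ (N ⊔ E)/N`. -/
theorem gIso_aux (N E : Subgroup G) [N.Normal] [E.Normal] :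
    IsGIso (N ⊓ E) E N (N ⊔ E) := by
  have hFN : N ⊓ E ≤ N := inf_le_left
  let q : G ⧸ (N ⊓ E) →* G ⧸ N :=
    QuotientGroup.map (N ⊓ E) N (MonoidHom.id G) (fun x hx => hFN hx)
  have hq : ∀ x : G, q ((QuotientGroup.mk' (N ⊓ E)) x) = (QuotientGroup.mk' N) x :=
    fun _ => rfl
  have hmem : ∀ x : (E.map (QuotientGroup.mk' (N ⊓ E))),
      (q.comp (E.map (QuotientGroup.mk' (N ⊓ E))).subtype) x ∈
        (N ⊔ E).map (QuotientGroup.mk' N) := by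
    rintro ⟨x, a, ha, rfl⟩
    exact ⟨a, Subgroup.mem_sup_right ha, rfl⟩
  let φ : (E.map (QuotientGroup.mk' (N ⊓ E))) →* ((N ⊔ E).map (QuotientGroup.mk' N)) :=
    MonoidHom.codRestrict (q.comp (E.map (QuotientGroup.mk' (N ⊓ E))).subtype) _ hmem
  have hφcoe : ∀ x : (E.map (QuotientGroup.mk' (N ⊓ E))), (φ x : G ⧸ N) = q (x : G ⧸ (N ⊓ E)) :=
    fun _ => rfl
  have hbij : Function.Bijective φ := by
    constructor
    · rintro ⟨x, hx⟩ ⟨y, hy⟩ hxy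
      obtain ⟨c, hc, rfl⟩ := hx
      obtain ⟨d, hd, rfl⟩ := hy
      have h1 : (QuotientGroup.mk' N) c = (QuotientGroup.mk' N) d := by
        have := congrArg (Subtype.val : ((N ⊔ E).map (QuotientGroup.mk' N)) → G ⧸ N) hxy
        rwa [hφcoe, hφcoe] at this
      rw [QuotientGroup.mk'_apply, QuotientGroup.mk'_apply, QuotientGroup.eq] at h1
      apply Subtype.ext
      show (QuotientGroup.mk' (N ⊓ E)) c = (QuotientGroup.mk' (N ⊓ E)) d
      rw [QuotientGroup.mk'_apply, QuotientGroup.mk'_apply, QuotientGroup.eq]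
      exact Subgroup.mem_inf.mpr ⟨h1, E.mul_mem (E.inv_mem hc) hd⟩
    · rintro ⟨x, c, hc, rfl⟩
      have hc' : c ∈ (N : Set G) * (E : Set G) := by
        rw [← Subgroup.normal_mul]; exact hc
      obtain ⟨m, hm, a, ha, rfl⟩ := hc'
      refine ⟨⟨(QuotientGroup.mk' (N ⊓ E)) a, ⟨a, ha, rfl⟩⟩, ?_⟩
      apply Subtype.ext
      rw [hφcoe]
      show (QuotientGroup.mk' N) a = (QuotientGroup.mk' N) (m * a)
      rw [map_mul]
      have h1 : (QuotientGroup.mk' N) m = 1 := (QuotientGroup.eq_one_iff m).mpr hm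
      rw [h1, one_mul]
  refine ⟨MulEquiv.ofBijective φ hbij, ?_⟩
  intro g a h
  show (φ ⟨_, h⟩ : G ⧸ N) = (QuotientGroup.mk' N) g * (φ a : G ⧸ N) * ((QuotientGroup.mk' N) g)⁻¹
  rw [hφcoe, hφcoe]
  show q ((QuotientGroup.mk' (N ⊓ E)) g * (a : G ⧸ (N ⊓ E)) * ((QuotientGroup.mk' (N ⊓ E)) g)⁻¹)
      = _
  rw [map_mul, map_mul, map_inv, hq]

theorem perfect_quot_absurd [Group.IsSolvable G] (N A : Subgroup G) [N.Normal]
    (hNA : N < A) (h : ⁅A, A⁆ ⊔ N = A) : False := by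
  set Abar := A.map (QuotientGroup.mk' N) with hAbar
  have hbar : ⁅Abar, Abar⁆ = Abar := by
    rw [hAbar, ← Subgroup.map_commutator]
    conv_rhs => rw [← h]
    rw [Subgroup.map_sup, QuotientGroup.map_mk'_self, sup_bot_eq]
  have hle : ∀ n : ℕ, Abar ≤ derivedSeries (G ⧸ N) n := by
    intro n
    induction n with
    | zero => exact le_top
    | succ n ih =>
      rw [derivedSeries_succ, ← hbar]
      exact Subgroup.commutator_mono ih ih
  obtain ⟨n, hn⟩ := (isSolvable_def (G ⧸ N)).mp inferInstance
  have h2 : Abar = ⊥ := le_bot_iff.mp (hn ▸ hle n)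
  have h3 : A ≤ N := by
    have := (Subgroup.map_eq_bot_iff A).mp h2
    rwa [QuotientGroup.ker_mk'] at this
  exact absurd h3 (not_le_of_gt hNA)

theorem primitive_data [Finite G] [Group.IsSolvable G] (M : Subgroup G) (hM : IsCoatom M) :
    ∃ A : Subgroup G, A.Normal ∧ socAbove M.normalCore = A ∧ M.normalCore < A ∧
      (∀ B : Subgroup G, B.Normal → M.normalCore ≤ B → B ≤ A → B = M.normalCore ∨ B = A) ∧
      M ⊓ A = M.normalCore ∧ crownC M.normalCore A = A ∧
      (∀ B : Subgroup G, B.Normal → M.normalCore < B → A ≤ B) := by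
  set N := M.normalCore with hNdef
  have hNM : N ≤ M := Subgroup.normalCore_le M
  have hNtop : N < ⊤ := lt_of_le_of_lt hNM (lt_top_iff_ne_top.mpr hM.1)
  -- a minimal normal subgroup above N
  obtain ⟨A, hA, hAmin⟩ := (Finite.to_wellFoundedLT (α := Subgroup G)).wf.has_min
    {B : Subgroup G | B.Normal ∧ N < B} ⟨⊤, inferInstance, hNtop⟩
  obtain ⟨hAnorm, hNA⟩ := hA
  haveI := hAnorm
  have chief : ∀ B : Subgroup G, B.Normal → N ≤ B → B ≤ A → B = N ∨ B = A := by
    intro B hBn hNB hBA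
    rcases eq_or_lt_of_le hNB with h | h
    · exact Or.inl h.symm
    · right
      by_contra hne
      exact hAmin B ⟨hBn, h⟩ (lt_of_le_of_ne hBA hne)
  -- A/N is abelian
  have hcomm : ⁅A, A⁆ ≤ N := by
    rcases chief (⁅A, A⁆ ⊔ N) inferInstance le_sup_right
        (sup_le (Subgroup.commutator_le_left A A) hNA.le) with h | h
    · exact le_sup_left.trans h.le
    · exact absurd h (fun hh => perfect_quot_absurd N A hNA hh)
  have hAM : ¬ A ≤ M := by
    intro h
    exact absurd (Subgroup.normal_le_normalCore.mpr h) (not_le_of_gt hNA)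
  have hMAtop : M ⊔ A = ⊤ := hM.2 _ (left_lt_sup.mpr hAM)
  -- M ⊓ A = N
  have hMAnorm : (M ⊓ A).Normal := by
    constructor
    intro x hx g
    have hg : g ∈ (M : Set G) * (A : Set G) := by
      rw [← Subgroup.mul_normal M A, hMAtop]; exact Set.mem_univ g
    obtain ⟨m, hm, a, ha, rfl⟩ := hg
    show m * a * x * (m * a)⁻¹ ∈ M ⊓ A
    have hyA : a * x * a⁻¹ ∈ A := A.mul_mem (A.mul_mem ha hx.2) (A.inv_mem ha)
    have hyM : a * x * a⁻¹ ∈ M := by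
      have h1 : ⁅a, x⁆ ∈ ⁅A, A⁆ := Subgroup.commutator_mem_commutator ha hx.2
      have e : a * x * a⁻¹ = ⁅a, x⁆ * x := by rw [commutatorElement_def]; group
      rw [e]
      exact M.mul_mem (hNM (hcomm h1)) hx.1
    have e2 : m * a * x * (m * a)⁻¹ = m * (a * x * a⁻¹) * m⁻¹ := by group
    rw [e2]
    exact ⟨M.mul_mem (M.mul_mem hm hyM) (M.inv_mem hm),
      hAnorm.conj_mem _ hyA m⟩
  have hMA : M ⊓ A = N := by
    apply le_antisymm
    · exact (@Subgroup.normal_le_normalCore G _ M (M ⊓ A) hMAnorm).mpr inf_le_left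
    · exact le_inf hNM hNA.le
  -- the centralizer of A/N is A
  haveI hCn : (crownC N A).Normal := crownC_normal N A hAnorm
  have hAC : A ≤ crownC N A := by
    intro a ha
    rw [mem_crownC_iff]
    intro x hx
    have h1 : ⁅a⁻¹, x⁻¹⁆ ∈ ⁅A, A⁆ :=
      Subgroup.commutator_mem_commutator (A.inv_mem ha) (A.inv_mem hx)
    have e : ⁅a⁻¹, x⁻¹⁆ = a⁻¹ * x⁻¹ * a * x := by rw [commutatorElement_def]; group
    rw [← e]
    exact hcomm h1
  have hNC : N ≤ crownC N A := hNA.le.trans hAC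
  have hCMnorm : (crownC N A ⊓ M).Normal := by
    constructor
    intro x hx g
    have hg : g ∈ (M : Set G) * (A : Set G) := by
      rw [← Subgroup.mul_normal M A, hMAtop]; exact Set.mem_univ g
    obtain ⟨m, hm, a, ha, rfl⟩ := hg
    show m * a * x * (m * a)⁻¹ ∈ crownC N A ⊓ M
    have hxC : x ∈ crownC N A := hx.1
    rw [mem_crownC_iff] at hxC
    have h1 := hxC a⁻¹ (A.inv_mem ha)
    -- h1 : x⁻¹ * a * x * a⁻¹ ∈ N  (since (a⁻¹)⁻¹ = a)
    rw [inv_inv] at h1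
    have h2 := (Subgroup.normalCore_normal M).conj_mem _ h1 x
    have e : x * (x⁻¹ * a * x * a⁻¹) * x⁻¹ = a * x * a⁻¹ * x⁻¹ := by group
    rw [e] at h2
    have hyM : a * x * a⁻¹ ∈ M := by
      have e2 : a * x * a⁻¹ = (a * x * a⁻¹ * x⁻¹) * x := by group
      rw [e2]
      exact M.mul_mem (hNM h2) hx.2
    have hyC : a * x * a⁻¹ ∈ crownC N A := hCn.conj_mem _ hx.1 a
    have e3 : m * a * x * (m * a)⁻¹ = m * (a * x * a⁻¹) * m⁻¹ := by group
    rw [e3]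
    exact ⟨hCn.conj_mem _ hyC m, M.mul_mem (M.mul_mem hm hyM) (M.inv_mem hm)⟩
  have hCM : crownC N A ⊓ M ≤ N :=
    (@Subgroup.normal_le_normalCore G _ M _ hCMnorm).mpr inf_le_right
  have hCA : crownC N A = A := by
    apply le_antisymm
    · have hd := dedN M (crownC N A) A hAC
      have htop : A ⊔ M = ⊤ := by rw [sup_comm]; exact hMAtop
      rw [htop, inf_top_eq] at hd
      rw [hd]
      exact sup_le le_rfl (hCM.trans hNA.le)
    · exact hAC
  -- uniqueness of the minimal normal subgroup over N
  have huniq : ∀ B : Subgroup G, B.Normal → N < B → A ≤ B := by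
    intro B hBn hNB
    haveI := hBn
    rcases chief (A ⊓ B) inferInstance (le_inf hNA.le hNB.le) inf_le_left with h | h
    · exfalso
      have hBC : B ≤ crownC N A := by
        intro b hb
        rw [mem_crownC_iff]
        intro x hx
        have h1 : ⁅b⁻¹, x⁻¹⁆ ∈ ⁅B, A⁆ :=
          Subgroup.commutator_mem_commutator (B.inv_mem hb) (A.inv_mem hx)
        have h2 : ⁅B, A⁆ ≤ N := by
          rw [← h]
          exact (Subgroup.commutator_le_inf B A).trans (by rw [inf_comm])
        have e : ⁅b⁻¹, x⁻¹⁆ = b⁻¹ * x⁻¹ * b * x := by rw [commutatorElement_def]; group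
        rw [← e]
        exact h2 h1
      have hBA : B ≤ A := hBC.trans hCA.le
      have : B = N := by rw [← h, inf_eq_right.mpr hBA]
      exact absurd this (ne_of_gt hNB)
    · exact inf_eq_left.mp h
  have hsoc : socAbove N = A := by
    apply le_antisymm
    · exact sInf_le ⟨hAnorm, hNA⟩
    · apply le_sInf
      rintro B ⟨hBn, hNB⟩
      exact huniq B hBn hNB
  exact ⟨A, hAnorm, hsoc, hNA, chief, hMA, hCA, huniq⟩

theorem giso_core_congr {Y X N₁ N₂ : Subgroup G} [Y.Normal] [N₁.Normal] [N₂.Normal]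
    (h : N₁ = N₂) (hi : IsGIso N₁ (socAbove N₁) Y X) : IsGIso N₂ (socAbove N₂) Y X := by
  subst h; exact hi

theorem giso_congr {Y₁ X₁ Y₂ X₂ Y₁' X₁' Y₂' X₂' : Subgroup G}
    [Y₁.Normal] [Y₂.Normal] [Y₁'.Normal] [Y₂'.Normal]
    (hY₁ : Y₁ = Y₁') (hX₁ : X₁ = X₁') (hY₂ : Y₂ = Y₂') (hX₂ : X₂ = X₂')
    (h : IsGIso Y₁ X₁ Y₂ X₂) : IsGIso Y₁' X₁' Y₂' X₂' := by
  subst hY₁ hX₁ hY₂ hX₂; exact h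

theorem crownR_normal (Y X : Subgroup G) [Y.Normal] : (crownR Y X).Normal := by
  constructor
  intro x hx g
  rw [crownR, Subgroup.mem_sInf] at hx ⊢
  rintro M ⟨hMco, hMiso⟩
  set f := MulAut.conj g with hf
  set M' := M.comap f.toMonoidHom with hM'
  have hM'co : IsCoatom M' := by
    have := Subgroup.isCoatom_comap (f : G ≃* G) (K := M)
    exact this.mpr hMco
  have hcore : M'.normalCore = M.normalCore := by
    ext z
    constructor
    · intro hz
      show ∀ b : G, b * z * b⁻¹ ∈ M
      intro b
      have h1 : (g⁻¹ * b) * z * (g⁻¹ * b)⁻¹ ∈ M' := hz (g⁻¹ * b)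
      have h2 : f ((g⁻¹ * b) * z * (g⁻¹ * b)⁻¹) ∈ M := h1
      have e : f ((g⁻¹ * b) * z * (g⁻¹ * b)⁻¹) = b * z * b⁻¹ := by
        rw [hf, MulAut.conj_apply]; group
      rwa [e] at h2
    · intro hz
      show ∀ b : G, b * z * b⁻¹ ∈ M'
      intro b
      show f (b * z * b⁻¹) ∈ M
      have h1 : (g * b) * z * (g * b)⁻¹ ∈ M := hz (g * b)
      have e : f (b * z * b⁻¹) = (g * b) * z * (g * b)⁻¹ := by
        rw [hf, MulAut.conj_apply]; group
      rwa [e]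
  have hM'mem : IsCoatom M' ∧ IsGIso M'.normalCore (socAbove M'.normalCore) Y X := by
    exact ⟨hM'co, giso_core_congr hcore.symm hMiso⟩
  have hxM' : x ∈ M' := hx M' hM'mem
  have : f x ∈ M := hxM'
  rwa [hf, MulAut.conj_apply] at this

end PC


/-- Let `G` be a finite solvable group with trivial Frattini subgroup, and let
`C = R × D` be a crown decomposition as in Lemma `exists_crown_decomposition`
(`C = C_G(X/Y)`, `R = R_G(X/Y)` for a complemented chief factor `X/Y`, `D` a
nontrivial normal subgroup).  If `H ≤ G` satisfies `HD = HR = G`, then `H = G`. -/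
theorem eq_top_of_sup_crown
    (G : Type*) [Group G] [Finite G] [Group.IsSolvable G] (hfrat : frattini G = ⊥)
    (Y X : Subgroup G) [Y.Normal] [X.Normal]
    (hchief : IsChiefFactor Y X) (hcompl : IsComplemented' Y X)
    (D : Subgroup G) (hD : D.Normal) (hDbot : D ≠ ⊥)
    (hRD : crownR Y X ⊓ D = ⊥) (hC : crownR Y X ⊔ D = crownC Y X)
    (H : Subgroup G) (hHD : H ⊔ D = ⊤) (hHR : H ⊔ crownR Y X = ⊤) :
    H = ⊤ := by
  by_contra hne
  haveI := hD
  haveI hRn : (crownR Y X).Normal := PC.crownR_normal Y X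
  obtain ⟨M, hMco, hHM⟩ :=
    ((Finite.to_isCoatomic (α := Subgroup G)).eq_top_or_exists_le_coatom H).resolve_left hne
  have hMDtop : M ⊔ D = ⊤ :=
    top_unique (by rw [← hHD]; exact sup_le_sup_right hHM D)
  have hMRtop : M ⊔ crownR Y X = ⊤ :=
    top_unique (by rw [← hHR]; exact sup_le_sup_right hHM _)
  have hDM : ¬ D ≤ M := by
    intro h
    exact hMco.1 (by rw [← hMDtop, sup_eq_left.mpr h])
  have hRM : ¬ crownR Y X ≤ M := by
    intro h
    exact hMco.1 (by rw [← hMRtop, sup_eq_left.mpr h])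
  obtain ⟨A, hAnorm, hsoc, hNA, hchiefA, hMAinf, hCCA, huniqA⟩ := PC.primitive_data M hMco
  haveI := hAnorm
  have hDN : ¬ D ≤ M.normalCore := fun h => hDM (h.trans (Subgroup.normalCore_le M))
  have hAND : A ≤ M.normalCore ⊔ D := huniqA _ inferInstance (left_lt_sup.mpr hDN)
  -- E := A ⊓ D,  F := D ⊓ M.normalCore
  have hFE : D ⊓ M.normalCore ≤ A ⊓ D :=
    le_inf (inf_le_right.trans hNA.le) inf_le_left
  have hA_NE : M.normalCore ⊔ (A ⊓ D) = A := by
    have hded := PC.dedN D A M.normalCore hNA.le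
    rw [inf_eq_left.mpr hAND] at hded
    exact hded.symm
  have hNEF : M.normalCore ⊓ (A ⊓ D) = D ⊓ M.normalCore := by
    rw [← inf_assoc, inf_eq_left.mpr hNA.le, inf_comm]
  -- W₂ := (D ⊓ M.normalCore) ⊔ crownR Y X,  W₁ := (A ⊓ D) ⊔ W₂
  have hFW₂ : D ⊓ M.normalCore ≤ (D ⊓ M.normalCore) ⊔ crownR Y X := le_sup_left
  have hEW2inf : (A ⊓ D) ⊓ ((D ⊓ M.normalCore) ⊔ crownR Y X) = D ⊓ M.normalCore := by
    have h1 := PC.dedK (D ⊓ M.normalCore) (A ⊓ D) (crownR Y X) hFE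
    have h2 : (A ⊓ D) ⊓ crownR Y X = ⊥ := by
      rw [← le_bot_iff, ← hRD]
      exact le_inf inf_le_right (inf_le_left.trans inf_le_right)
    rw [h2, sup_bot_eq] at h1
    exact h1
  have hEW2 : ¬ (A ⊓ D) ≤ (D ⊓ M.normalCore) ⊔ crownR Y X := by
    intro h
    have h1 : A ⊓ D = D ⊓ M.normalCore := by rw [← hEW2inf, inf_eq_left.mpr h]
    apply hNA.ne
    rw [← hA_NE, h1, sup_eq_left.mpr inf_le_right]
  have hDC : D ≤ crownC Y X := by rw [← hC]; exact le_sup_right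
  have hQ : ∀ Q : Subgroup G, Q.Normal → Q ≤ A ⊓ D →
      ¬ Q ≤ (D ⊓ M.normalCore) ⊔ crownR Y X →
      Q ⊔ ((D ⊓ M.normalCore) ⊔ crownR Y X) = (A ⊓ D) ⊔ ((D ⊓ M.normalCore) ⊔ crownR Y X) := by
    intro Q hQn hQE hQW
    haveI := hQn
    have hQN : Q ⊔ M.normalCore = A := by
      rcases hchiefA (Q ⊔ M.normalCore) inferInstance le_sup_right
          (sup_le (hQE.trans inf_le_left) hNA.le) with h | h
      · exfalso
        apply hQW
        have hQn' : Q ≤ M.normalCore := le_sup_left.trans h.le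
        exact (le_inf (hQE.trans inf_le_right) hQn').trans hFW₂
      · exact h
    have hEQF : A ⊓ D ≤ Q ⊔ (D ⊓ M.normalCore) := by
      have hd := PC.dedK Q (A ⊓ D) M.normalCore hQE
      rw [hQN, inf_eq_left.mpr inf_le_left] at hd
      rw [hd]
      have : (A ⊓ D) ⊓ M.normalCore ≤ D ⊓ M.normalCore :=
        inf_le_inf_right _ inf_le_right
      exact sup_le le_sup_left (this.trans le_sup_right)
    apply le_antisymm
    · exact sup_le (hQE.trans le_sup_left) le_sup_right
    · refine sup_le ?_ le_sup_right
      refine hEQF.trans (sup_le le_sup_left ?_)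
      exact hFW₂.trans le_sup_right
  -- the main claim, by strong induction on the order of P
  have claimA : ∀ n : ℕ, ∀ P : Subgroup G, Nat.card P ≤ n → P.Normal → P ≤ A ⊓ D →
      ¬ P ≤ (D ⊓ M.normalCore) ⊔ crownR Y X →
      IsGIso ((D ⊓ M.normalCore) ⊔ crownR Y X) ((A ⊓ D) ⊔ ((D ⊓ M.normalCore) ⊔ crownR Y X))
        Y X := by
    intro n
    induction n with
    | zero =>
      intro P hc _ _ _
      exact absurd (Nat.le_zero.mp hc) (Nat.card_pos (α := P)).ne'
    | succ n ih =>
      intro P hcard hPn hPE hPW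
      haveI := hPn
      have hex : ∃ M' ∈ {M : Subgroup G |
          IsCoatom M ∧ IsGIso M.normalCore (socAbove M.normalCore) Y X}, ¬ P ≤ M' := by
        by_contra hall
        push_neg at hall
        have hPR : P ≤ crownR Y X := le_sInf hall
        have hbot : P ≤ ⊥ := by
          rw [← hRD]
          exact le_inf hPR (hPE.trans inf_le_right)
        exact hPW (hbot.trans bot_le)
      obtain ⟨M', ⟨hM'co, hM'iso⟩, hPM'⟩ := hex
      obtain ⟨A', hA'n, hsoc', hNA', hchief', hMA', hCC', huniq'⟩ := PC.primitive_data M' hM'co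
      haveI := hA'n
      have hM'isoA : IsGIso M'.normalCore A' Y X := by
        have := PC.giso_congr (rfl : M'.normalCore = M'.normalCore) hsoc'
          (rfl : Y = Y) (rfl : X = X) hM'iso
        exact this
      have hCA' : crownC Y X = A' := by
        apply le_antisymm
        · have h1 := PC.crownC_le (PC.symm' hA'n hM'isoA)
          rwa [hCC'] at h1
        · have h1 := PC.crownC_le hM'isoA
          rwa [hCC'] at h1
      have hPA' : P ≤ A' := by
        rw [← hCA']
        exact hPE.trans (inf_le_right.trans hDC)
      have hPN' : ¬ P ≤ M'.normalCore := fun h => hPM' (h.trans (Subgroup.normalCore_le M'))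
      by_cases h1 : P ⊓ M'.normalCore ≤ (D ⊓ M.normalCore) ⊔ crownR Y X
      · have hPsup : P ⊔ ((D ⊓ M.normalCore) ⊔ crownR Y X)
            = (A ⊓ D) ⊔ ((D ⊓ M.normalCore) ⊔ crownR Y X) := hQ P hPn hPE hPW
        rcases hchief' ((P ⊓ ((D ⊓ M.normalCore) ⊔ crownR Y X)) ⊔ M'.normalCore) inferInstance
            le_sup_right (sup_le (inf_le_left.trans hPA') hNA'.le) with hc | hc
        · -- B ⊔ N' = N'
          have hBN' : P ⊓ ((D ⊓ M.normalCore) ⊔ crownR Y X) = P ⊓ M'.normalCore :=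
            le_antisymm (le_inf inf_le_left (le_sup_left.trans hc.le)) (le_inf inf_le_left h1)
          have hPsupN' : P ⊔ M'.normalCore = A' := by
            rcases hchief' (P ⊔ M'.normalCore) inferInstance le_sup_right
                (sup_le hPA' hNA'.le) with h | h
            · exact absurd (le_sup_left.trans h.le) hPN'
            · exact h
          have i1 : IsGIso (((D ⊓ M.normalCore) ⊔ crownR Y X) ⊓ P) P
              ((D ⊓ M.normalCore) ⊔ crownR Y X)
              (((D ⊓ M.normalCore) ⊔ crownR Y X) ⊔ P) :=
            PC.gIso_aux _ P
          have i1' : IsGIso ((D ⊓ M.normalCore) ⊔ crownR Y X)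
              ((A ⊓ D) ⊔ ((D ⊓ M.normalCore) ⊔ crownR Y X))
              (P ⊓ ((D ⊓ M.normalCore) ⊔ crownR Y X)) P := by
            refine PC.symm' hPn (PC.giso_congr (inf_comm _ _) rfl rfl ?_ i1)
            rw [sup_comm]
            exact hPsup
          have i2 : IsGIso (M'.normalCore ⊓ P) P M'.normalCore (M'.normalCore ⊔ P) :=
            PC.gIso_aux _ P
          have i2' : IsGIso (P ⊓ ((D ⊓ M.normalCore) ⊔ crownR Y X)) P M'.normalCore A' := by
            refine PC.giso_congr ?_ rfl rfl ?_ i2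
            · rw [inf_comm]; exact hBN'.symm
            · rw [sup_comm]; exact hPsupN'
          exact PC.trans' (PC.trans' i1' i2') hM'isoA
        · -- B ⊔ N' = A' : contradiction
          exfalso
          have hPB : P ≤ (P ⊓ ((D ⊓ M.normalCore) ⊔ crownR Y X)) ⊔ M'.normalCore :=
            hPA'.trans hc.ge
          have hd := PC.dedK (P ⊓ ((D ⊓ M.normalCore) ⊔ crownR Y X)) P M'.normalCore inf_le_left
          rw [inf_eq_left.mpr hPB] at hd
          apply hPW
          rw [hd]
          exact sup_le inf_le_right h1
      · have hlt : P ⊓ M'.normalCore < P :=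
          lt_of_le_of_ne inf_le_left (fun h => hPN' (by rw [← h]; exact inf_le_right))
        have hcard' : Nat.card (P ⊓ M'.normalCore : Subgroup G) ≤ n := by
          have h2 := PC.card_lt hlt
          omega
        exact ih _ hcard' inferInstance (inf_le_left.trans hPE) h1
  have hclaim := claimA (Nat.card (A ⊓ D : Subgroup G)) (A ⊓ D) le_rfl inferInstance le_rfl hEW2
  have iA : IsGIso (M.normalCore ⊓ (A ⊓ D)) (A ⊓ D) M.normalCore (M.normalCore ⊔ (A ⊓ D)) :=
    PC.gIso_aux _ _
  have iA' : IsGIso M.normalCore A (D ⊓ M.normalCore) (A ⊓ D) :=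
    PC.symm' inferInstance (PC.giso_congr hNEF rfl rfl hA_NE iA)
  have iB : IsGIso (((D ⊓ M.normalCore) ⊔ crownR Y X) ⊓ (A ⊓ D)) (A ⊓ D)
      ((D ⊓ M.normalCore) ⊔ crownR Y X) (((D ⊓ M.normalCore) ⊔ crownR Y X) ⊔ (A ⊓ D)) :=
    PC.gIso_aux _ _
  have iB' : IsGIso (D ⊓ M.normalCore) (A ⊓ D) ((D ⊓ M.normalCore) ⊔ crownR Y X)
      ((A ⊓ D) ⊔ ((D ⊓ M.normalCore) ⊔ crownR Y X)) := by
    refine PC.giso_congr ?_ rfl rfl (sup_comm _ _) iB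
    rw [inf_comm]
    exact hEW2inf
  have final : IsGIso M.normalCore A Y X :=
    PC.trans' (PC.trans' iA' iB') hclaim
  have hMS : M ∈ {M : Subgroup G |
      IsCoatom M ∧ IsGIso M.normalCore (socAbove M.normalCore) Y X} :=
    ⟨hMco, PC.giso_congr rfl hsoc.symm rfl rfl final⟩
  exact hRM (sInf_le hMS)
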